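/- Let X be a nonempty Hausdorff real topological vector space, Ψ nonempty, f : X → P(Z,Ψ), and ε₀ > 0 such that Min(f,ε+,Ψ) is compact for all real ε with 0 < ε ≤ ε₀. If in addition x ↦ ψ^△(f(x)) is lower semicontinuous on X for every ψ ∈ Ψ, then Min(f,0,Ψ) is nonempty and is a (0,Ψ)-solution: for every ψ ∈ Ψ, ⨅_{x∈Min(f,0,Ψ)} ψ^△(f(x)) ≤ I_ψ, and every element of Min(f,0,Ψ) is a (0,Ψ)-minimizer of f. -/

import Mathlib

open Set Classical Pointwise

/-- Inf-extension of `ψ` to sets: `ψ^△(D) = ⨅_{z ∈ D} ψ(z)` in `EReal`. -/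
noncomputable def infExt {Z : Type*} (ψ : Z → EReal) (D : Set Z) : EReal :=
  ⨅ z ∈ D, ψ z

/-- The Ψ-closure `cl_Ψ D = ⋂_{ψ ∈ Ψ} {z | ψ^△(D) ≤ ψ(z)}`. -/
noncomputable def clPsi {Z : Type*} (Ψ : Set (Z → EReal)) (D : Set Z) : Set Z :=
  ⋂ ψ ∈ Ψ, {z : Z | infExt ψ D ≤ ψ z}

/-- `I_ψ = ⨅_{x ∈ X} ψ^△(f(x))`. -/
noncomputable def infVal {X Z : Type*} (f : X → Set Z) (ψ : Z → EReal) : EReal :=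
  ⨅ x : X, infExt ψ (f x)

/-- The bound `−1/ε`, with the convention `−1/0 := −∞`, as an `EReal`. -/
noncomputable def negInvBound (ε : ℝ) : EReal :=
  if ε = 0 then ⊥ else (((-(1 / ε)) : ℝ) : EReal)

/-- `x` is an `(ε,Ψ)`-minimizer of `f`: there is `ψ ∈ Ψ` with
`ψ^△(f(x)) ≤ I_ψ + ε` if `I_ψ ≠ −∞`, and `ψ^△(f(x)) ≤ −1/ε` if `I_ψ = −∞`. -/
noncomputable def IsEpsMin {X Z : Type*} (Ψ : Set (Z → EReal)) (f : X → Set Z)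
    (ε : ℝ) (x : X) : Prop :=
  ∃ ψ ∈ Ψ, if infVal f ψ = ⊥ then infExt ψ (f x) ≤ negInvBound ε
    else infExt ψ (f x) ≤ infVal f ψ + (ε : EReal)

/-- `x` is an `(ε+,Ψ)`-minimizer of `f`. -/
noncomputable def IsEpsPlusMin {X Z : Type*} (Ψ : Set (Z → EReal)) (f : X → Set Z)
    (ε : ℝ) (x : X) : Prop :=
  ∀ δ : ℝ, 0 < δ → IsEpsMin Ψ f (ε + δ) x

/-- `Min(f,ε,Ψ)`: the set of `(ε,Ψ)`-minimizers of `f`. -/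
noncomputable def MinSet {X Z : Type*} (Ψ : Set (Z → EReal)) (f : X → Set Z)
    (ε : ℝ) : Set X :=
  {x : X | IsEpsMin Ψ f ε x}

/-- `Min(f,ε+,Ψ)`: the set of `(ε+,Ψ)`-minimizers of `f`. -/
noncomputable def MinPlusSet {X Z : Type*} (Ψ : Set (Z → EReal)) (f : X → Set Z)
    (ε : ℝ) : Set X :=
  {x : X | IsEpsPlusMin Ψ f ε x}

section Aux

variable {X Z : Type*}

lemma isEpsMin_zero_iff (Ψ : Set (Z → EReal)) (f : X → Set Z) (x : X) :
    IsEpsMin Ψ f 0 x ↔ ∃ ψ ∈ Ψ, infExt ψ (f x) ≤ infVal f ψ := by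
  unfold IsEpsMin
  constructor
  · rintro ⟨ψ, hψ, h⟩
    refine ⟨ψ, hψ, ?_⟩
    split_ifs at h with hb
    · simpa [negInvBound, hb] using h
    · simpa using h
  · rintro ⟨ψ, hψ, h⟩
    refine ⟨ψ, hψ, ?_⟩
    split_ifs with hb
    · simpa [negInvBound, hb] using h
    · simpa using h

/-- The `ε`-bound used in `IsEpsMin` for a fixed `ψ`. -/
noncomputable def epsBnd {X Z : Type*} (f : X → Set Z) (ψ : Z → EReal) (ε : ℝ) : EReal :=
  if infVal f ψ = ⊥ then negInvBound ε else infVal f ψ + (ε : EReal)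

lemma epsBnd_mono (f : X → Set Z) (ψ : Z → EReal) {ε ε' : ℝ} (hε : 0 < ε) (h : ε ≤ ε') :
    epsBnd f ψ ε ≤ epsBnd f ψ ε' := by
  have hε' : 0 < ε' := lt_of_lt_of_le hε h
  have h1 : negInvBound ε = ((-(1 / ε) : ℝ) : EReal) := if_neg hε.ne'
  have h2 : negInvBound ε' = ((-(1 / ε') : ℝ) : EReal) := if_neg hε'.ne'
  unfold epsBnd
  split_ifs with hb
  · rw [h1, h2]
    refine EReal.coe_le_coe_iff.2 ?_
    have := one_div_le_one_div_of_le hε h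
    linarith
  · exact add_le_add_right (EReal.coe_le_coe_iff.2 h) _

lemma isEpsMin_of_le_epsBnd {Ψ : Set (Z → EReal)} {f : X → Set Z} {ψ : Z → EReal}
    (hψ : ψ ∈ Ψ) {x : X} {ε : ℝ} (h : infExt ψ (f x) ≤ epsBnd f ψ ε) :
    IsEpsMin Ψ f ε x :=
  ⟨ψ, hψ, by unfold epsBnd at h; split_ifs at h with hb <;> simp [IsEpsMin, hb, h]⟩

lemma epsBnd_nonempty [Nonempty X] (f : X → Set Z) (ψ : Z → EReal) {ε : ℝ} (hε : 0 < ε) :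
    ∃ x : X, infExt ψ (f x) ≤ epsBnd f ψ ε := by
  unfold epsBnd
  rcases eq_or_ne (infVal f ψ) ⊥ with hb | hb
  · rw [if_pos hb]
    have : infVal f ψ < negInvBound ε := by
      rw [hb, negInvBound, if_neg hε.ne']
      exact EReal.bot_lt_coe _
    obtain ⟨x, hx⟩ := iInf_lt_iff.1 this
    exact ⟨x, hx.le⟩
  · rw [if_neg hb]
    rcases eq_or_ne (infVal f ψ) ⊤ with ht | ht
    · refine ⟨Classical.arbitrary X, ?_⟩
      rw [ht, EReal.top_add_of_ne_bot (by simp : ((ε : ℝ) : EReal) ≠ ⊥)]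
      exact le_top
    · obtain ⟨r, hr⟩ : ∃ r : ℝ, infVal f ψ = (r : EReal) :=
        ⟨(infVal f ψ).toReal, (EReal.coe_toReal ht hb).symm⟩
      have : infVal f ψ < infVal f ψ + (ε : EReal) := by
        rw [hr, ← EReal.coe_add]
        exact EReal.coe_lt_coe_iff.2 (by linarith)
      obtain ⟨x, hx⟩ := iInf_lt_iff.1 this
      exact ⟨x, hx.le⟩

end Aux

/-- if moreover each `ψ^△ ∘ f` is lower semicontinuous, then
`Min(f,0,Ψ)` is nonempty and a `(0,Ψ)`-solution. -/
theorem stmt17 {X Z : Type*} [Nonempty X] [AddCommGroup X] [Module ℝ X]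
    [TopologicalSpace X] [IsTopologicalAddGroup X] [ContinuousSMul ℝ X] [T2Space X]
    [Preorder Z] (Ψ : Set (Z → EReal)) (hΨ : Ψ.Nonempty)
    (hmono : ∀ ψ ∈ Ψ, Monotone ψ) (f : X → Set Z)
    (hf : ∀ x, f x = clPsi Ψ (f x)) (ε₀ : ℝ) (hε₀ : 0 < ε₀)
    (hcpt : ∀ ε : ℝ, 0 < ε → ε ≤ ε₀ → IsCompact (MinPlusSet Ψ f ε))
    (hlsc : ∀ ψ ∈ Ψ, LowerSemicontinuous (fun x => infExt ψ (f x))) :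
    (MinSet Ψ f 0).Nonempty ∧
    (∀ ψ ∈ Ψ, (⨅ x ∈ MinSet Ψ f 0, infExt ψ (f x)) ≤ infVal f ψ) ∧
    (∀ x ∈ MinSet Ψ f 0, ∃ ψ ∈ Ψ, infExt ψ (f x) ≤ infVal f ψ) := by
  -- key claim: for every ψ ∈ Ψ there is a 0-minimizer witnessing ψ
  have key : ∀ ψ ∈ Ψ, ∃ x : X, infExt ψ (f x) ≤ infVal f ψ := by
    intro ψ hψ
    set ε : ℕ → ℝ := fun n => ε₀ / (n + 1) with hεdef
    have hεpos : ∀ n, 0 < ε n := fun n =>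
      div_pos hε₀ (by positivity)
    have hεle : ∀ n, ε n ≤ ε₀ := by
      intro n
      rw [hεdef]
      rw [div_le_iff₀ (by positivity : (0:ℝ) < (n:ℝ) + 1)]
      nlinarith [Nat.cast_nonneg (α := ℝ) n, hε₀.le]
    set K : ℕ → Set X := fun n => {x : X | infExt ψ (f x) ≤ epsBnd f ψ (ε n)} with hKdef
    have hKclosed : ∀ n, IsClosed (K n) :=
      fun n => (hlsc ψ hψ).isClosed_preimage (epsBnd f ψ (ε n))
    have hKne : ∀ n, (K n).Nonempty := fun n => epsBnd_nonempty f ψ (hεpos n)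
    have hKsub : ∀ n, K n ⊆ MinPlusSet Ψ f ε₀ := by
      intro n x hx δ hδ
      exact isEpsMin_of_le_epsBnd hψ
        (le_trans hx (epsBnd_mono f ψ (hεpos n) (le_trans (hεle n) (by linarith))))
    have hKanti : ∀ n, K (n + 1) ⊆ K n := by
      intro n x hx
      refine le_trans hx (epsBnd_mono f ψ (hεpos (n + 1)) ?_)
      apply div_le_div_of_nonneg_left hε₀.le (by positivity)
      push_cast; linarith
    have hK0 : IsCompact (K 0) :=
      (hcpt ε₀ hε₀ le_rfl).of_isClosed_subset (hKclosed 0) (hKsub 0)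
    obtain ⟨x, hx⟩ :=
      IsCompact.nonempty_iInter_of_sequence_nonempty_isCompact_isClosed K hKanti hKne hK0 hKclosed
    simp only [mem_iInter] at hx
    refine ⟨x, ?_⟩
    set a := infExt ψ (f x) with ha
    rcases eq_or_ne (infVal f ψ) ⊥ with hb | hb
    · -- a ≤ -(1/ε n) for all n, hence a = ⊥
      rw [hb]
      by_contra hcon
      push_neg at hcon
      obtain ⟨r, hr1, hr2⟩ := EReal.exists_between_coe_real hcon
      obtain ⟨n, hn⟩ := exists_nat_gt (-r * ε₀)
      have hxn := hx n
      rw [hKdef] at hxn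
      simp only [mem_setOf_eq, epsBnd, if_pos hb, negInvBound, if_neg (hεpos n).ne'] at hxn
      have hlt : -(1 / ε n) < r := by
        rw [hεdef, one_div_div, neg_lt, lt_div_iff₀ hε₀]
        linarith
      exact absurd hr2 (not_lt.2 (le_trans hxn (EReal.coe_le_coe_iff.2 hlt.le)))
    · -- real / top case
      rcases eq_or_ne (infVal f ψ) ⊤ with ht | ht
      · rw [ht]; exact le_top
      obtain ⟨r, hr⟩ : ∃ r : ℝ, infVal f ψ = (r : EReal) :=
        ⟨(infVal f ψ).toReal, (EReal.coe_toReal ht hb).symm⟩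
      rw [hr]
      by_contra hcon
      push_neg at hcon
      obtain ⟨s, hs1, hs2⟩ := EReal.exists_between_coe_real hcon
      obtain ⟨n, hn⟩ := exists_nat_gt (ε₀ / (s - r))
      have hxn := hx n
      rw [hKdef] at hxn
      simp only [mem_setOf_eq, epsBnd, if_neg hb, hr, ← EReal.coe_add] at hxn
      have hsr : 0 < s - r := by
        have := EReal.coe_lt_coe_iff.1 hs1; linarith
      have hεn : ε n < s - r := by
        rw [hεdef, div_lt_iff₀ (by positivity : (0:ℝ) < (n:ℝ)+1)]
        rw [div_lt_iff₀ hsr] at hn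
        nlinarith
      have : a < (s : EReal) := lt_of_le_of_lt hxn (EReal.coe_lt_coe_iff.2 (by linarith))
      exact absurd hs2 (not_lt.2 this.le)
  -- assemble
  obtain ⟨ψ₀, hψ₀⟩ := hΨ
  obtain ⟨x₀, hx₀⟩ := key ψ₀ hψ₀
  have hmem : ∀ {x ψ}, ψ ∈ Ψ → infExt ψ (f x) ≤ infVal f ψ → x ∈ MinSet Ψ f 0 := by
    intro x ψ hψ h
    exact (isEpsMin_zero_iff Ψ f x).2 ⟨ψ, hψ, h⟩
  refine ⟨⟨x₀, hmem hψ₀ hx₀⟩, ?_, ?_⟩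
  · intro ψ hψ
    obtain ⟨x, hx⟩ := key ψ hψ
    exact le_trans (biInf_le _ (hmem hψ hx)) hx
  · intro x hx
    exact (isEpsMin_zero_iff Ψ f x).1 hx
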